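/- (Correctness of the reduction algorithm, Algorithm 1) Every integral binary quadratic form of discriminant D is properly equivalent to some reduced form of discriminant D; that is, for every (a,b,c) with b² − 4ac = D there exists γ ∈ SL₂(ℤ) such that γ*(a,b,c) is reduced. -/
import Mathlib


/-- The discriminant of the integral binary quadratic form `(a, b, c)`,
represented as the triple `f = (a, (b, c))`. -/
def disc (f : ℤ × ℤ × ℤ) : ℤ := f.2.1 ^ 2 - 4 * f.1 * f.2.2

/-- The form `(a, b, c)` of discriminant `D > 0` is reduced:
`|√D - 2|a|| < b < √D` (as real numbers). -/
def IsReducedForm (D : ℤ) (f : ℤ × ℤ × ℤ) : Prop :=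
  disc f = D ∧
  abs (Real.sqrt (D : ℝ) - 2 * |(f.1 : ℝ)|) < (f.2.1 : ℝ) ∧ (f.2.1 : ℝ) < Real.sqrt (D : ℝ)

/-- `g = (a₂, b₂, c₂)` is adjacent to the right of `f = (a₁, b₁, c₁)`:
both have discriminant `D`, `c₁ = a₂`, and `b₁ + b₂ ≡ 0 (mod 2 a₂)`. -/
def AdjRight (D : ℤ) (f g : ℤ × ℤ × ℤ) : Prop :=
  disc f = D ∧ disc g = D ∧ f.2.2 = g.1 ∧ (2 * g.1) ∣ (f.2.1 + g.2.1)

/-- The action of a `2 × 2` integer matrix `γ = [[s, t], [u, v]]` on a binary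
quadratic form: `(γ* f)(x, y) = f (s x + t y, u x + v y)`. -/
def actForm (γ : Matrix (Fin 2) (Fin 2) ℤ) (f : ℤ × ℤ × ℤ) : ℤ × ℤ × ℤ :=
  (f.1 * γ 0 0 ^ 2 + f.2.1 * γ 0 0 * γ 1 0 + f.2.2 * γ 1 0 ^ 2,
   2 * f.1 * γ 0 0 * γ 0 1 + f.2.1 * (γ 0 0 * γ 1 1 + γ 0 1 * γ 1 0) +
     2 * f.2.2 * γ 1 0 * γ 1 1,
   f.1 * γ 0 1 ^ 2 + f.2.1 * γ 0 1 * γ 1 1 + f.2.2 * γ 1 1 ^ 2)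

lemma disc_actForm (γ : Matrix (Fin 2) (Fin 2) ℤ) (f : ℤ × ℤ × ℤ) :
    disc (actForm γ f) = (γ 0 0 * γ 1 1 - γ 0 1 * γ 1 0)^2 * disc f := by
  simp only [disc, actForm]; ring

lemma actForm_actForm (A B : Matrix (Fin 2) (Fin 2) ℤ) (f : ℤ × ℤ × ℤ) :
    actForm A (actForm B f) = actForm (B * A) f := by
  simp only [actForm, Matrix.mul_apply, Fin.sum_univ_two, Prod.mk.injEq]
  refine ⟨by ring, by ring, by ring⟩

lemma actForm_explicit (v a b c : ℤ) :
    actForm !![0,-1;1,v] (a,b,c) = (c, -b + 2*c*v, a - b*v + c*v^2) := by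
  simp [actForm]; ring

/-- Correctness of the reduction algorithm (Algorithm 1): every integral binary
quadratic form of discriminant `D` is properly equivalent to a reduced form. -/
theorem stmt_15 (D : ℤ) (hD : 0 < D) (hDsq : ¬ IsSquare D)
    (f : ℤ × ℤ × ℤ) (hf : disc f = D) :
    ∃ γ : Matrix.SpecialLinearGroup (Fin 2) ℤ, IsReducedForm D (actForm γ.1 f) := by
  have hRZ : ∀ z : ℤ, (z : ℝ) ≠ Real.sqrt (D : ℝ) := by
    intro z hz
    apply hDsq
    refine ⟨z, ?_⟩
    have : ((z*z : ℤ) : ℝ) = (D : ℝ) := by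
      push_cast
      rw [show ((z:ℝ)*(z:ℝ)) = (z:ℝ)^2 by ring, hz, Real.sq_sqrt (by exact_mod_cast hD.le)]
    exact_mod_cast this.symm
  have hR2 : Real.sqrt (D:ℝ) ^ 2 = (D:ℝ) := Real.sq_sqrt (by exact_mod_cast hD.le)
  have hR0 : 0 < Real.sqrt (D:ℝ) := Real.sqrt_pos.mpr (by exact_mod_cast hD)
  set R : ℝ := Real.sqrt (D:ℝ) with hRdef
  suffices H : ∀ n : ℕ, ∀ f : ℤ × ℤ × ℤ, disc f = D → f.2.2.natAbs = n →
      ∃ γ : Matrix.SpecialLinearGroup (Fin 2) ℤ, IsReducedForm D (actForm γ.1 f) from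
    H f.2.2.natAbs f hf rfl
  intro n
  induction n using Nat.strong_induction_on with
  | _ n ih =>
    rintro ⟨a, b, c⟩ hf hn
    have hn' : c.natAbs = n := hn
    have hfD : b^2 - 4*a*c = D := hf
    have hc : c ≠ 0 := by
      intro h
      exact hDsq ⟨b, by rw [← hfD, h]; ring⟩
    have hcabs : 0 < |c| := abs_pos.mpr hc
    set m : ℤ := 2 * |c| with hmdef
    have hm : 0 < m := by positivity
    have hmR : (0:ℝ) < (m:ℝ) := by exact_mod_cast hm
    set k : ℤ := ⌈(R - m + b) / m⌉ with hkdef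
    set b' : ℤ := -b + m * k with hb'def
    have hb'cast : (b' : ℝ) = -(b:ℝ) + (m:ℝ) * (k:ℝ) := by rw [hb'def]; push_cast; ring
    -- upper bound: b' < R
    have hb'u : (b' : ℝ) < R := by
      have h2 : ((k:ℝ)) < (R - m + b)/m + 1 := Int.ceil_lt_add_one _
      have h3 : ((k:ℝ)) * m < ((R - m + b)/m + 1) * m :=
        mul_lt_mul_of_pos_right h2 hmR
      rw [add_mul, div_mul_cancel₀ _ (ne_of_gt hmR)] at h3
      rw [hb'cast]
      linarith
    -- lower bound: R - m < b'
    have hb'l : R - m < (b' : ℝ) := by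
      have h2 : (R - m + b)/m ≤ (k:ℝ) := Int.le_ceil _
      have h3 : R - m + b ≤ (k:ℝ) * m := (div_le_iff₀ hmR).mp h2
      have h4 : R - m ≤ (b':ℝ) := by rw [hb'cast]; linarith
      rcases lt_or_eq_of_le h4 with h | h
      · exact h
      · exfalso
        apply hRZ (b' + m)
        push_cast
        linarith
    -- the step matrix
    set v : ℤ := if 0 ≤ c then k else -k with hvdef
    have hcv : 2 * c * v = m * k := by
      rw [hvdef, hmdef]
      by_cases h : 0 ≤ c
      · rw [if_pos h, abs_of_nonneg h]
      · rw [if_neg h, abs_of_neg (lt_of_not_ge h)]; ring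
    have hdet : Matrix.det !![(0:ℤ),-1;1,v] = 1 := by simp [Matrix.det_fin_two_of]
    set γ0 : Matrix.SpecialLinearGroup (Fin 2) ℤ := ⟨!![0,-1;1,v], hdet⟩ with hγ0
    set c' : ℤ := a - b*v + c*v^2 with hc'def
    have hg : actForm γ0.1 (a,b,c) = (c, b', c') := by
      rw [show γ0.1 = !![0,-1;1,v] from rfl, actForm_explicit, hb'def, ← hcv, hc'def]
    have hdg : disc (c, b', c') = D := by
      rw [← hg, disc_actForm]
      have h1 : γ0.1 0 0 * γ0.1 1 1 - γ0.1 0 1 * γ0.1 1 0 = 1 := by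
        show (0:ℤ) * v - (-1) * 1 = 1; ring
      rw [h1, hf]; ring
    have hdg' : b'^2 - 4*c*c' = D := hdg
    have hcR : |(c:ℝ)| = ((|c| : ℤ) : ℝ) := by push_cast; ring
    have hmcast : (m:ℝ) = 2 * |(c:ℝ)| := by rw [hmdef]; push_cast; ring
    by_cases hred : abs (R - 2 * |(c:ℝ)|) < (b' : ℝ)
    · exact ⟨γ0, hg ▸ ⟨hdg, hred, hb'u⟩⟩
    · -- not reduced: |c'| < |c|, recurse
      push_neg at hred
      have h2cR : R < 2 * |(c:ℝ)| := by
        by_contra h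
        push_neg at h
        have habs0 : abs (R - 2 * |(c:ℝ)|) = R - 2 * |(c:ℝ)| := abs_of_nonneg (by linarith)
        rw [habs0] at hred
        rw [hmcast] at hb'l
        linarith
      have habs : abs (R - 2 * |(c:ℝ)|) = 2 * |(c:ℝ)| - R := by
        rw [abs_of_neg (show R - 2 * |(c:ℝ)| < 0 by linarith)]; ring
      rw [habs] at hred
      have hb's : (b':ℝ) < 2 * |(c:ℝ)| - R := by
        rcases lt_or_eq_of_le hred with h | h
        · exact h
        · exfalso
          apply hRZ (2 * |c| - b')
          push_cast
          rw [← hcR] at *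
          linarith
      have hb'l2 : R - 2 * |(c:ℝ)| < (b':ℝ) := by rw [hmcast] at hb'l; linarith
      have hsqabs : |(c:ℝ)|^2 = (c:ℝ)^2 := sq_abs _
      have key : |(b':ℝ)^2 - (D:ℝ)| < 4 * (c:ℝ)^2 := by
        rw [abs_lt]
        constructor
        · nlinarith [sq_nonneg ((b':ℝ))]
        · nlinarith [abs_nonneg (c:ℝ)]
      have keyZ : |b'^2 - D| < 4 * c^2 := by
        have h5 : ((|b'^2 - D| : ℤ) : ℝ) < ((4 * c^2 : ℤ) : ℝ) := by
          push_cast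
          exact key
        exact_mod_cast h5
      have h4 : b'^2 - D = 4 * c * c' := by linarith [hdg']
      have hcc' : |c'| < |c| := by
        rw [h4] at keyZ
        rw [abs_mul, abs_mul] at keyZ
        have h4' : |(4:ℤ)| = 4 := by norm_num
        rw [h4'] at keyZ
        have h6 : 4 * |c| * |c'| < 4 * |c| * |c| := by nlinarith [sq_abs c]
        exact lt_of_mul_lt_mul_left h6 (by positivity)
      have hcc'' : c'.natAbs < c.natAbs := by
        rw [Int.abs_eq_natAbs, Int.abs_eq_natAbs] at hcc'
        exact_mod_cast hcc'
      have hltn : c'.natAbs < n := hn' ▸ hcc''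
      obtain ⟨γ', hγ'⟩ := ih c'.natAbs hltn (c, b', c') hdg rfl
      refine ⟨γ0 * γ', ?_⟩
      have hmul : ((γ0 * γ' : Matrix.SpecialLinearGroup (Fin 2) ℤ) : Matrix (Fin 2) (Fin 2) ℤ)
          = γ0.1 * γ'.1 := rfl
      rw [hmul, ← actForm_actForm, hg]
      exact hγ'
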